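/- Let m ≥ 2 be even, n divisible by m/2, N = 2n/m, and let k be an integer with 2 ≤ k ≤ N/2. Let v be an element of the Pareto front F of m-OJZJ_k and let x ∈ {0,1}^n satisfy f(x) = v. Then for every j ∈ {1, …, m/2}: if v_{2j−1} = k then x^j = 0^N; if v_{2j−1} = N + k then x^j = 1^N; and if 2k ≤ v_{2j−1} ≤ N then k ≤ |x^j|_1 ≤ N − k. -/

import Mathlib

/-- Number of one-bits of a block `b ∈ {0,1}^N`. -/
def ones {N : ℕ} (b : Fin N → Bool) : ℕ :=
  (Finset.univ.filter fun i => b i = true).card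

/-- Number of zero-bits of a block `b ∈ {0,1}^N`. -/
def zeros {N : ℕ} (b : Fin N → Bool) : ℕ :=
  (Finset.univ.filter fun i => b i = false).card

/-- A search point in `{0,1}^n` with `n = M * N`, presented as `M` blocks of length `N`. -/
abbrev Point (M N : ℕ) := Fin M → Fin N → Bool

/-- The `m`-objective function `m`-OJZJ_k with `m = 2 * M` objectives (0-indexed:
objective `i` corresponds to the 1-indexed objective `i+1`, so even `i` is the
"ones" objective and odd `i` the "zeros" objective of block `i / 2`). -/
def mOJZJ (N k : ℕ) {M : ℕ} (x : Point M N) (i : Fin (2 * M)) : ℕ :=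
  let b := x ⟨i.val / 2, by have := i.isLt; omega⟩
  if i.val % 2 = 0 then
    if ones b ≤ N - k ∨ ones b = N then k + ones b else N - ones b
  else
    if zeros b ≤ N - k ∨ zeros b = N then k + zeros b else N - zeros b

/-- `x` weakly dominates `y`. -/
def weaklyDom (N k : ℕ) {M : ℕ} (x y : Point M N) : Prop :=
  ∀ i, mOJZJ N k y i ≤ mOJZJ N k x i

/-- `x` dominates `y`. -/
def dom (N k : ℕ) {M : ℕ} (x y : Point M N) : Prop :=
  weaklyDom N k x y ∧ ∃ i, mOJZJ N k y i < mOJZJ N k x i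

/-- `x` is Pareto-optimal: no search point dominates it. -/
def paretoOptimal (N k : ℕ) {M : ℕ} (x : Point M N) : Prop :=
  ¬ ∃ y : Point M N, dom N k y x

/-- The Pareto front: the set of fitness vectors of Pareto-optimal search points. -/
def paretoFront (N k M : ℕ) : Set (Fin (2 * M) → ℕ) :=
  {v | ∃ x : Point M N, paretoOptimal N k x ∧ mOJZJ N k x = v}

/-- if `v` is on the Pareto front and `f(x) = v`, then for every block `j`:
`v_{2j−1} = k` forces `x^j = 0^N`, `v_{2j−1} = N + k` forces `x^j = 1^N`, and
`2k ≤ v_{2j−1} ≤ N` forces `k ≤ |x^j|_1 ≤ N − k`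
(with 0-indexing, `v_{2j-1}` is `v (2j)`). -/
theorem pareto_front_genotype (m n N k : ℕ) (hm : 2 ≤ m) (hme : m % 2 = 0)
    (hn : 0 < n) (hdvd : m / 2 ∣ n) (hN : N = 2 * n / m)
    (hk2 : 2 ≤ k) (hkN : k ≤ N / 2)
    (v : Fin (2 * (m / 2)) → ℕ) (hv : v ∈ paretoFront N k (m / 2))
    (x : Point (m / 2) N) (hx : mOJZJ N k x = v) (j : Fin (m / 2)) :
    (v ⟨2 * j.val, by have := j.isLt; omega⟩ = k → x j = fun _ => false) ∧
    (v ⟨2 * j.val, by have := j.isLt; omega⟩ = N + k → x j = fun _ => true) ∧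
    (2 * k ≤ v ⟨2 * j.val, by have := j.isLt; omega⟩ →
      v ⟨2 * j.val, by have := j.isLt; omega⟩ ≤ N →
      k ≤ ones (x j) ∧ ones (x j) ≤ N - k) := by
  classical
  subst hx
  have hle : ones (x j) ≤ N := by
    simpa [ones] using (Finset.card_filter_le (Finset.univ : Finset (Fin N)) _)
  have h2k : 2 * k ≤ N := by omega
  have hval : mOJZJ N k x ⟨2 * j.val, by have := j.isLt; omega⟩ =
      if ones (x j) ≤ N - k ∨ ones (x j) = N then k + ones (x j) else N - ones (x j) := by
    have hmod : (2 * j.val) % 2 = 0 := by omega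
    have hdiv : (⟨2 * j.val / 2, by have := j.isLt; omega⟩ : Fin (m / 2)) = j := by
      apply Fin.ext; show 2 * j.val / 2 = j.val; omega
    simp [mOJZJ, hmod, hdiv]
  rw [hval]
  set o := ones (x j) with ho
  refine ⟨?_, ?_, ?_⟩
  · intro h
    have ho0 : o = 0 := by
      by_cases hc : o ≤ N - k ∨ o = N
      · rw [if_pos hc] at h; omega
      · rw [if_neg hc] at h; omega
    funext i
    have hfe : (Finset.univ.filter fun i => x j i = true) = ∅ :=
      Finset.card_eq_zero.mp ho0
    by_contra hb
    have : i ∈ Finset.univ.filter fun i => x j i = true := by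
      simp [Bool.not_eq_false] at hb ⊢; exact hb
    simp [hfe] at this
  · intro h
    have hoN : o = N := by
      by_cases hc : o ≤ N - k ∨ o = N
      · rw [if_pos hc] at h; omega
      · rw [if_neg hc] at h; omega
    have hfe : (Finset.univ.filter fun i => x j i = true) = Finset.univ := by
      apply Finset.eq_univ_of_card
      exact hoN.trans (Fintype.card_fin N).symm
    funext i
    have : i ∈ Finset.univ.filter fun i => x j i = true := by
      rw [hfe]; exact Finset.mem_univ i
    simpa using this
  · intro h1 h2
    by_cases hc : o ≤ N - k ∨ o = N
    · rw [if_pos hc] at h1 h2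
      rcases hc with hc | hc <;> omega
    · rw [if_neg hc] at h1 h2
      push_neg at hc
      omega
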